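/- Let M ≥ 1 and let D be an invertible 3×3 real matrix with ‖D‖ ≤ M and ‖D⁻¹‖ ≤ M (operator norms). Then there is a constant C, depending only on M, with the following property: for every ε > 0, every ℓ ≥ ε, and every nonempty set Q ⊂ ℝ³ of diameter at most ℓ, the set { ξ ∈ ℤ³ : (ε D ((0,1)³ + ξ)) ∩ Q ≠ ∅ } is finite and its cardinality is at most C (ℓ/ε)³, where ε D ((0,1)³ + ξ) = { ε D (y + ξ) : y ∈ (0,1)³ }. -/

import Mathlib

open MeasureTheory Set Matrix

/-- Euclidean norm on `ℝ³` (realized as `Fin 3 → ℝ`). -/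
noncomputable def enorm3 (x : Fin 3 → ℝ) : ℝ := Real.sqrt (∑ i, x i ^ 2)

/-- The (Euclidean) operator norm of a `3 × 3` real matrix. -/
noncomputable def opNorm3 (A : Matrix (Fin 3) (Fin 3) ℝ) : ℝ :=
  ‖(Matrix.toEuclideanCLM (𝕜 := ℝ) A : EuclideanSpace ℝ (Fin 3) →L[ℝ] EuclideanSpace ℝ (Fin 3))‖

/-- The open unit cube `(0,1)³` in `ℝ³`. -/
def unitCube : Set (Fin 3 → ℝ) := {y | ∀ i, y i ∈ Ioo (0 : ℝ) 1}

lemma enorm3_eq (x : Fin 3 → ℝ) : enorm3 x = ‖(WithLp.equiv 2 (Fin 3 → ℝ)).symm x‖ := by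
  rw [EuclideanSpace.norm_eq]
  simp [enorm3, Real.norm_eq_abs, sq_abs]

lemma enorm3_mulVec_le (A : Matrix (Fin 3) (Fin 3) ℝ) (v : Fin 3 → ℝ) :
    enorm3 (A.mulVec v) ≤ opNorm3 A * enorm3 v := by
  rw [enorm3_eq, enorm3_eq, ← Matrix.toLin'_apply, WithLp.equiv_symm_apply, Matrix.toLin'_apply,
    ← Matrix.toEuclideanCLM_toLp]
  exact (Matrix.toEuclideanCLM (𝕜 := ℝ) A).le_opNorm _

lemma enorm3_sub_le (a b : Fin 3 → ℝ) : enorm3 (a - b) ≤ enorm3 a + enorm3 b := by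
  simp only [enorm3_eq]
  exact norm_sub_le _ _

lemma enorm3_smul (s : ℝ) (v : Fin 3 → ℝ) : enorm3 (s • v) = |s| * enorm3 v := by
  simp only [enorm3_eq]
  rw [show (WithLp.equiv 2 (Fin 3 → ℝ)).symm (s • v) = s • (WithLp.equiv 2 (Fin 3 → ℝ)).symm v from rfl,
    norm_smul, Real.norm_eq_abs]

lemma enorm3_nonneg (v : Fin 3 → ℝ) : 0 ≤ enorm3 v := Real.sqrt_nonneg _

lemma abs_apply_le_enorm3 (v : Fin 3 → ℝ) (i : Fin 3) : |v i| ≤ enorm3 v := by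
  rw [← Real.sqrt_sq_eq_abs]
  refine Real.sqrt_le_sqrt ?_
  exact Finset.single_le_sum (f := fun j => v j ^ 2) (fun j _ => sq_nonneg _) (Finset.mem_univ i)

lemma enorm3_cube_le {y : Fin 3 → ℝ} (hy : y ∈ unitCube) : enorm3 y ≤ Real.sqrt 3 := by
  refine Real.sqrt_le_sqrt ?_
  calc ∑ i, y i ^ 2 ≤ ∑ _i : Fin 3, (1:ℝ) := by
        refine Finset.sum_le_sum fun i _ => ?_
        have h := hy i
        nlinarith [h.1, h.2]
    _ = 3 := by simp

/-- Counting lemma: the number of transformed cells `ε D ((0,1)³ + ξ)`, `ξ ∈ ℤ³`, meeting a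
set of diameter at most `ℓ ≥ ε` is at most `C (ℓ/ε)³`, with `C` depending only on the bound
`M` on `‖D‖` and `‖D⁻¹‖`. -/
theorem stmt_8 (M : ℝ) (hM : 1 ≤ M) :
    ∃ C : ℝ, ∀ D : Matrix (Fin 3) (Fin 3) ℝ, IsUnit D →
      opNorm3 D ≤ M → opNorm3 D⁻¹ ≤ M →
      ∀ ε : ℝ, 0 < ε → ∀ ℓ : ℝ, ε ≤ ℓ →
        ∀ Q : Set (Fin 3 → ℝ), Q.Nonempty → (∀ x ∈ Q, ∀ y ∈ Q, enorm3 (x - y) ≤ ℓ) →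
          ∃ hfin : {ξ : Fin 3 → ℤ |
              (((fun y => ε • D.mulVec (y + fun i => (ξ i : ℝ))) '' unitCube) ∩ Q).Nonempty}.Finite,
            (hfin.toFinset.card : ℝ) ≤ C * (ℓ / ε) ^ 3 := by
  refine ⟨(2 * M + 5) ^ 3, ?_⟩
  intro D hD hD1 hD2 ε hε ℓ hℓ Q hQne hQdiam
  obtain ⟨q₀, hq₀⟩ := hQne
  set R : ℝ := M * (ℓ / ε) + Real.sqrt 3 with hRdef
  set c : Fin 3 → ℝ := ε⁻¹ • D⁻¹.mulVec q₀ with hcdef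
  have hεℓ : (1:ℝ) ≤ ℓ / ε := (one_le_div hε).mpr hℓ
  have hsqrt3 : Real.sqrt 3 ≤ 2 := by
    rw [show (2:ℝ) = Real.sqrt 4 by
      rw [show (4:ℝ) = 2 ^ 2 by norm_num, Real.sqrt_sq (by norm_num)]]
    exact Real.sqrt_le_sqrt (by norm_num)
  have hR0 : 0 ≤ R := by positivity
  -- key coordinate bound
  have key : ∀ ξ : Fin 3 → ℤ, (((fun y => ε • D.mulVec (y + fun i => (ξ i : ℝ))) '' unitCube)
      ∩ Q).Nonempty → ∀ i, c i - R ≤ (ξ i : ℝ) ∧ (ξ i : ℝ) ≤ c i + R := by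
    intro ξ hξ i
    obtain ⟨x, ⟨y, hy, hxy⟩, hxQ⟩ := hξ
    set ξR : Fin 3 → ℝ := fun i => (ξ i : ℝ)
    have hDdet : IsUnit D.det := (Matrix.isUnit_iff_isUnit_det D).mp hD
    have hinv : y + ξR = ε⁻¹ • D⁻¹.mulVec x := by
      rw [← hxy, Matrix.mulVec_smul, Matrix.mulVec_mulVec, Matrix.nonsing_inv_mul D hDdet,
        Matrix.one_mulVec, smul_smul, inv_mul_cancel₀ hε.ne', one_smul]
    have hdiff : ξR - c = ε⁻¹ • D⁻¹.mulVec (x - q₀) - y := by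
      rw [Matrix.mulVec_sub, smul_sub, ← hinv, hcdef]
      abel
    have hb : enorm3 (ξR - c) ≤ R := by
      rw [hdiff]
      calc enorm3 (ε⁻¹ • D⁻¹.mulVec (x - q₀) - y)
          ≤ enorm3 (ε⁻¹ • D⁻¹.mulVec (x - q₀)) + enorm3 y := enorm3_sub_le _ _
        _ ≤ ε⁻¹ * (M * ℓ) + Real.sqrt 3 := by
            refine add_le_add ?_ (enorm3_cube_le hy)
            rw [enorm3_smul, abs_of_pos (inv_pos.mpr hε)]
            refine mul_le_mul_of_nonneg_left ?_ (inv_pos.mpr hε).le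
            calc enorm3 (D⁻¹.mulVec (x - q₀)) ≤ opNorm3 D⁻¹ * enorm3 (x - q₀) :=
                  enorm3_mulVec_le _ _
              _ ≤ M * ℓ := by
                  refine mul_le_mul hD2 (hQdiam x hxQ q₀ hq₀) (enorm3_nonneg _)
                    (le_trans (norm_nonneg _) hD2)
        _ = R := by rw [hRdef]; ring
    have habs : |ξR i - c i| ≤ R := le_trans (by
      have := abs_apply_le_enorm3 (ξR - c) i
      simpa using this) hb
    rw [abs_le] at habs
    constructor <;> [linarith [habs.1]; linarith [habs.2]]
  -- finiteness via a pi-Finset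
  set F : Finset (Fin 3 → ℤ) :=
    Fintype.piFinset (fun i => Finset.Icc ⌈c i - R⌉ ⌊c i + R⌋) with hF
  have hsub : {ξ : Fin 3 → ℤ |
      (((fun y => ε • D.mulVec (y + fun i => (ξ i : ℝ))) '' unitCube) ∩ Q).Nonempty} ⊆ ↑F := by
    intro ξ hξ
    have h := key ξ hξ
    simp only [hF, Finset.mem_coe, Fintype.mem_piFinset, Finset.mem_Icc]
    intro i
    exact ⟨Int.ceil_le.mpr (h i).1, Int.le_floor.mpr (h i).2⟩
  refine ⟨Set.Finite.subset F.finite_toSet hsub, ?_⟩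
  have hcard : (Set.Finite.subset F.finite_toSet hsub).toFinset.card ≤ F.card := by
    refine Finset.card_le_card ?_
    intro ξ hξ
    exact hsub ((Set.Finite.subset F.finite_toSet hsub).mem_toFinset.mp hξ)
  refine le_trans (Nat.cast_le.mpr hcard) ?_
  have hFcard : F.card = ∏ i : Fin 3, (Finset.Icc ⌈c i - R⌉ ⌊c i + R⌋).card :=
    Fintype.card_piFinset _
  rw [hFcard]
  push_cast
  have hfac : ∀ i : Fin 3, ((Finset.Icc ⌈c i - R⌉ ⌊c i + R⌋).card : ℝ) ≤ (2 * M + 5) * (ℓ / ε) := by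
    intro i
    rw [Int.card_Icc]
    have h1 : ((⌊c i + R⌋ + 1 - ⌈c i - R⌉ : ℤ) : ℝ) ≤ 2 * R + 1 := by
      push_cast
      have := Int.floor_le (c i + R)
      have := Int.le_ceil (c i - R)
      linarith
    have h2 : (0:ℝ) ≤ (2 * M + 5) * (ℓ / ε) := by positivity
    have h3 : (2:ℝ) * R + 1 ≤ (2 * M + 5) * (ℓ / ε) := by
      rw [hRdef]
      nlinarith
    rcases le_or_gt (⌊c i + R⌋ + 1 - ⌈c i - R⌉ : ℤ) 0 with h | h
    · rw [Int.toNat_of_nonpos h]; simpa using h2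
    · have heq : ((⌊c i + R⌋ + 1 - ⌈c i - R⌉).toNat : ℝ)
          = ((⌊c i + R⌋ + 1 - ⌈c i - R⌉ : ℤ) : ℝ) := by
        rw [← Int.cast_natCast, Int.toNat_of_nonneg h.le]
      rw [heq]; exact le_trans h1 h3
  calc (∏ i : Fin 3, ((Finset.Icc ⌈c i - R⌉ ⌊c i + R⌋).card : ℝ))
      ≤ ∏ _i : Fin 3, ((2 * M + 5) * (ℓ / ε)) := by
        refine Finset.prod_le_prod (fun i _ => by positivity) (fun i _ => hfac i)
    _ = ((2 * M + 5) * (ℓ / ε)) ^ 3 := by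
        rw [Finset.prod_const]; norm_num
    _ = (2 * M + 5) ^ 3 * (ℓ / ε) ^ 3 := by ring
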